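/- Let n = |F| and let α_1,...,α_n enumerate F. Let 2 ≤ ℓ+1 ≤ r ≤ n, let δ_1,...,δ_{ℓ+1} ∈ F be nonzero, and let S_ℓ = {i ∈ {1,...,n} \ {1,...,r} : ∃ 1 ≤ j < k ≤ ℓ such that (j,k) collide at i}. For 1 ≤ j ≤ ℓ, let T_j = {i ∈ {1,...,n} : α_i ∉ {α_j, α_{ℓ+1}} and (ℓ+1, j) collide at i}. Suppose that T_j ∩ ({1,...,r} ∪ S_ℓ) = ∅ for every 1 ≤ j ≤ ℓ. Then T_j ∩ T_k = ∅ for all 1 ≤ j < k ≤ ℓ. -/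
import Mathlib


/-- `x` and `y` lie in the same multiplicative coset of `B* = B \ {0}` inside `F`:
`x ∈ y·B*`, i.e. `x = y·b` for some nonzero `b ∈ B`. -/
def SameCoset (B : Type*) {F : Type*} [Field B] [Field F] [Algebra B F] (x y : F) : Prop :=
  ∃ b : B, b ≠ 0 ∧ x = y * algebraMap B F b

/-- The pair with multipliers `δa, δb` and points `αa, αb` collides at the point `αi`:
`αi ∉ {αa, αb}` and `(δa/(αi - αa))·B* = (δb/(αi - αb))·B*`. -/
def CollidesAt (B : Type*) {F : Type*} [Field B] [Field F] [Algebra B F]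
    (δa δb αa αb αi : F) : Prop :=
  αi ≠ αa ∧ αi ≠ αb ∧ SameCoset B (δa / (αi - αa)) (δb / (αi - αb))

lemma SameCoset.symm' {B F : Type*} [Field B] [Field F] [Algebra B F] {x y : F}
    (h : SameCoset B x y) : SameCoset B y x := by
  obtain ⟨b, hb, hxy⟩ := h
  exact ⟨b⁻¹, inv_ne_zero hb, by
    rw [hxy, map_inv₀, mul_assoc, mul_inv_cancel₀ (by
      simpa using (map_ne_zero (algebraMap B F)).mpr hb), mul_one]⟩

lemma SameCoset.trans' {B F : Type*} [Field B] [Field F] [Algebra B F] {x y z : F}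
    (h1 : SameCoset B x y) (h2 : SameCoset B y z) : SameCoset B x z := by
  obtain ⟨b, hb, hxy⟩ := h1
  obtain ⟨c, hc, hyz⟩ := h2
  exact ⟨c * b, mul_ne_zero hc hb, by rw [hxy, hyz, map_mul, mul_assoc]⟩


/-- Let `n = |F|`, `α` enumerate `F`, `2 ≤ ℓ+1 ≤ r ≤ n`, let
`δ_1, …, δ_{ℓ+1}` be nonzero, and let
`S_ℓ = {i ∉ {1,…,r} : ∃ j < k ≤ ℓ, (j,k) collide at i}`. For `1 ≤ j ≤ ℓ` let
`T_j = {i : α_i ∉ {α_j, α_{ℓ+1}} ∧ (ℓ+1,j) collide at i}`. If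

`T_j ∩ ({1,…,r} ∪ S_ℓ) = ∅` for every `j`, then the sets `T_j` are pairwise
disjoint. -/
theorem collision_sets_pairwise_disjoint
    {B F : Type*} [Field B] [Field F] [Fintype B] [Fintype F] [Algebra B F]
    {n r ℓ : ℕ} (hn : n = Fintype.card F)
    (α : Fin n → F) (hα : Function.Bijective α)
    (hℓ1 : 1 ≤ ℓ) (hℓr : ℓ + 1 ≤ r) (hrn : r ≤ n)
    (δ : Fin (ℓ + 1) → F) (hδ : ∀ a, δ a ≠ 0)
    (S : Set (Fin n))
    (hS : S = {i : Fin n | r ≤ (i : ℕ) ∧ ∃ a b : Fin ℓ, a < b ∧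
      CollidesAt B (δ (Fin.castSucc a)) (δ (Fin.castSucc b))
        (α (Fin.castLE (by omega) a)) (α (Fin.castLE (by omega) b)) (α i)})
    (T : Fin ℓ → Set (Fin n))
    (hT : ∀ j : Fin ℓ, T j = {i : Fin n |
      CollidesAt B (δ (Fin.last ℓ)) (δ (Fin.castSucc j))
        (α ⟨ℓ, by omega⟩) (α (Fin.castLE (by omega) j)) (α i)})
    (hdisj : ∀ j : Fin ℓ, T j ∩ ({i : Fin n | (i : ℕ) < r} ∪ S) = ∅) :
    ∀ j k : Fin ℓ, j < k → T j ∩ T k = ∅ := by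
  intro j k hjk
  ext i
  simp only [Set.mem_inter_iff, Set.mem_empty_iff_false, iff_false, not_and]
  intro hij hik
  rw [hT j] at hij
  rw [hT k] at hik
  obtain ⟨hij1, hij2, hij3⟩ := hij
  obtain ⟨hik1, hik2, hik3⟩ := hik
  have hcol : CollidesAt B (δ (Fin.castSucc j)) (δ (Fin.castSucc k))
      (α (Fin.castLE (by omega) j)) (α (Fin.castLE (by omega) k)) (α i) :=
    ⟨hij2, hik2, (hij3.symm').trans' hik3⟩
  have hir : ¬ ((i : ℕ) < r) := by
    intro hlt
    have := hdisj j
    have : i ∈ T j ∩ ({i : Fin n | (i : ℕ) < r} ∪ S) :=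
      ⟨by rw [hT j]; exact ⟨hij1, hij2, hij3⟩, Or.inl hlt⟩
    rw [hdisj j] at this
    exact this
  have hiS : i ∈ S := by
    rw [hS]
    exact ⟨le_of_not_gt hir, j, k, hjk, hcol⟩
  have : i ∈ T j ∩ ({i : Fin n | (i : ℕ) < r} ∪ S) :=
    ⟨by rw [hT j]; exact ⟨hij1, hij2, hij3⟩, Or.inr hiS⟩
  rw [hdisj j] at this
  exact this
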